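/- Let K be a field of characteristic 0. For any symmetric 2×2 matrices a₁,…,a_{2k} and b₁,…,b_{2l} over K, the left-normed commutators of even length commute: [a₁,…,a_{2k}]·[b₁,…,b_{2l}] = [b₁,…,b_{2l}]·[a₁,…,a_{2k}]. -/

import Mathlib

/-- Left-normed commutator of a list of matrices: `[a₁, a₂, …, aₙ]`;
the empty list gives `1`. -/
def leftNormedComm {K : Type*} [Field K] :
    List (Matrix (Fin 2) (Fin 2) K) → Matrix (Fin 2) (Fin 2) K
  | [] => 1
  | (a :: t) => t.foldl (fun u v => u * v - v * u) a

private lemma foldl_transpose {K : Type*} [Field K]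
    (t : List (Matrix (Fin 2) (Fin 2) K)) :
    ∀ (u : Matrix (Fin 2) (Fin 2) K) (ε : K), (∀ v ∈ t, v.transpose = v) →
      u.transpose = ε • u →
      (t.foldl (fun u v => u * v - v * u) u).transpose
        = ((-1 : K) ^ t.length * ε) • t.foldl (fun u v => u * v - v * u) u := by
  induction t with
  | nil => intro u ε _ hu; simpa using hu
  | cons v t ih =>
    intro u ε hs hu
    have hv : v.transpose = v := hs v (List.mem_cons_self)
    have h2 : (u * v - v * u).transpose = (-ε) • (u * v - v * u) := by
      rw [Matrix.transpose_sub, Matrix.transpose_mul, Matrix.transpose_mul, hv, hu]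
      rw [Matrix.mul_smul, Matrix.smul_mul]
      module
    have := ih (u * v - v * u) (-ε) (fun w hw => hs w (List.mem_cons_of_mem _ hw)) h2
    simp only [List.foldl_cons, List.length_cons] at *
    rw [this]
    congr 1
    ring

private lemma even_comm_skew_or_one {K : Type*} [Field K]
    (L : List (Matrix (Fin 2) (Fin 2) K)) (hs : ∀ v ∈ L, v.transpose = v)
    (he : Even L.length) :
    leftNormedComm L = 1 ∨ (leftNormedComm L).transpose = - leftNormedComm L := by
  match L with
  | [] => exact Or.inl rfl
  | (u :: t) =>
    right
    have hu : u.transpose = (1 : K) • u := by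
      rw [one_smul]; exact hs u (List.mem_cons_self)
    have hodd : Odd t.length := by
      simp only [List.length_cons] at he
      have : ¬ Even t.length := by
        intro h
        have := Nat.even_add_one.mp he
        exact this h
      exact (Nat.not_even_iff_odd).mp this
    have := foldl_transpose t u 1 (fun w hw => hs w (List.mem_cons_of_mem _ hw)) hu
    rw [hodd.neg_one_pow, mul_one, neg_one_smul] at this
    exact this

private lemma skew_or_one_commute {K : Type*} [Field K] [CharZero K]
    (A B : Matrix (Fin 2) (Fin 2) K)
    (hA : A = 1 ∨ A.transpose = -A) (hB : B = 1 ∨ B.transpose = -B) :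
    A * B = B * A := by
  rcases hA with rfl | hA
  · rw [one_mul, mul_one]
  rcases hB with rfl | hB
  · rw [one_mul, mul_one]
  have eA : ∀ i j, A j i = - A i j := fun i j => by
    have := congrFun (congrFun hA i) j; simpa [Matrix.transpose_apply] using this
  have eB : ∀ i j, B j i = - B i j := fun i j => by
    have := congrFun (congrFun hB i) j; simpa [Matrix.transpose_apply] using this
  have hA00 : A 0 0 = 0 := by
    have h := eA 0 0
    have h2 : (2:K) * A 0 0 = 0 := by linear_combination h
    exact (mul_eq_zero.mp h2).resolve_left two_ne_zero
  have hA11 : A 1 1 = 0 := by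
    have h := eA 1 1
    have h2 : (2:K) * A 1 1 = 0 := by linear_combination h
    exact (mul_eq_zero.mp h2).resolve_left two_ne_zero
  have hB00 : B 0 0 = 0 := by
    have h := eB 0 0
    have h2 : (2:K) * B 0 0 = 0 := by linear_combination h
    exact (mul_eq_zero.mp h2).resolve_left two_ne_zero
  have hB11 : B 1 1 = 0 := by
    have h := eB 1 1
    have h2 : (2:K) * B 1 1 = 0 := by linear_combination h
    exact (mul_eq_zero.mp h2).resolve_left two_ne_zero
  have hA10 : A 1 0 = - A 0 1 := eA 0 1
  have hB10 : B 1 0 = - B 0 1 := eB 0 1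
  ext i j
  fin_cases i <;> fin_cases j <;>
    simp [Matrix.mul_apply, Fin.sum_univ_two, hA00, hA11, hB00, hB11, hA10, hB10] <;>
    ring

theorem even_length_commutators_commute (K : Type*) [Field K] [CharZero K]
    (k l : ℕ) (a : Fin (2 * k) → Matrix (Fin 2) (Fin 2) K)
    (b : Fin (2 * l) → Matrix (Fin 2) (Fin 2) K)
    (ha : ∀ i, (a i).IsSymm) (hb : ∀ i, (b i).IsSymm) :
    leftNormedComm (List.ofFn a) * leftNormedComm (List.ofFn b)
      = leftNormedComm (List.ofFn b) * leftNormedComm (List.ofFn a) := by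
  apply skew_or_one_commute
  · apply even_comm_skew_or_one
    · intro v hv
      rcases List.mem_ofFn.mp hv with ⟨i, rfl⟩
      exact ha i
    · simp [List.length_ofFn]
  · apply even_comm_skew_or_one
    · intro v hv
      rcases List.mem_ofFn.mp hv with ⟨i, rfl⟩
      exact hb i
    · simp [List.length_ofFn]
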